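/- Let f(t) = t^k, f_i = f([i]_q/[n]_q). Then Δ_q^r f_1 = ([r]_q! · q^{r(r+1)/2} / [n]_q^k) · S_q(k+1, r+1). -/

import Mathlib

open Finset Filter Topology

/-- The q-integer `[m]_q = 1 + q + ... + q^{m-1}`, with `[0]_q = 0`. -/
noncomputable def qInt (q : ℝ) (m : ℕ) : ℝ := ∑ i ∈ Finset.range m, q ^ i

/-- The q-factorial `[n]_q! = [1]_q [2]_q ⋯ [n]_q`. -/
noncomputable def qFact (q : ℝ) (n : ℕ) : ℝ := ∏ i ∈ Finset.range n, qInt q (i + 1)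

/-- The q-binomial coefficient `[n]_q!/([k]_q! [n-k]_q!)` (zero if `k > n`). -/
noncomputable def qBinom (q : ℝ) (n k : ℕ) : ℝ :=
  if k ≤ n then qFact q n / (qFact q k * qFact q (n - k)) else 0

/-- The q-Stirling number of the second kind. -/
noncomputable def qStirling (q : ℝ) (k r : ℕ) : ℝ :=
  (1 / (qFact q r * q ^ (r * (r - 1) / 2))) *
    ∑ i ∈ Finset.range (r + 1),
      (-1 : ℝ) ^ i * q ^ (i * (i - 1) / 2) * qBinom q r i * (qInt q (r - i)) ^ k

/-- The q-forward difference operator on sequences: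
`Δ_q^0 f_i = f_i`, `Δ_q^{r+1} f_i = Δ_q^r f_{i+1} - q^r Δ_q^r f_i`. -/
noncomputable def qDiff (q : ℝ) : ℕ → (ℕ → ℝ) → ℕ → ℝ
  | 0, f, i => f i
  | r + 1, f, i => qDiff q r f (i + 1) - q ^ r * qDiff q r f i

/-- The eigenvalues `λ_{k,q}^{(α,n)}` of the (α,q)-Bernstein operator. -/
noncomputable def lamEig (q α : ℝ) (n k : ℕ) : ℝ :=
  q ^ (k * (k - 1) / 2) * qFact q (n - 2) / (qFact q (n - k) * (qInt q n) ^ k) *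
    ((1 - α) * qInt q (n - k) * qInt q (n - 1 + k) + α * qInt q n * qInt q (n - 1))

/-- The coefficients `a_{n,q}(r,k)` of `T_{n,q,α}(t^k; x) = Σ_r a_{n,q}(r,k) x^r`. -/
noncomputable def aCoef (q α : ℝ) (n r k : ℕ) : ℝ :=
  q ^ (r * (r - 1) / 2) * qFact q (n - 2) / ((qInt q n) ^ k * qFact q (n - r)) *
    ((1 - α) * qInt q (n - r) *
        (qInt q (n + r - 1) * qStirling q (k + 1) (r + 1) -
          qInt q (r + 1) * qInt q (n - 1) * qStirling q k (r + 1)) +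
      α * qInt q n * qInt q (n - 1) * qStirling q k r)

/-- The (α,q)-Bernstein operator, via its forward-difference representation
`T_{n,q,α}(f;x) = Σ_{r=0}^n ((1-α) C_q(n-1,r) Δ_q^r g_0 + α C_q(n,r) Δ_q^r f_0) x^r`,
where `f_i = f([i]_q/[n]_q)` and
`g_i = (1 - q^{n-i-1}[i]_q/[n-1]_q) f_i + (q^{n-i-1}[i]_q/[n-1]_q) f_{i+1}`. -/
noncomputable def Talpha (q α : ℝ) (n : ℕ) (f : ℝ → ℝ) (x : ℝ) : ℝ :=
  let fs : ℕ → ℝ := fun i => f (qInt q i / qInt q n)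
  let gs : ℕ → ℝ := fun i =>
    (1 - q ^ (n - i - 1) * qInt q i / qInt q (n - 1)) * fs i +
      (q ^ (n - i - 1) * qInt q i / qInt q (n - 1)) * fs (i + 1)
  ∑ r ∈ Finset.range (n + 1),
    ((1 - α) * qBinom q (n - 1) r * qDiff q r gs 0 + α * qBinom q n r * qDiff q r fs 0) * x ^ r


lemma qInt_pos {q : ℝ} (hq : 0 < q) {m : ℕ} (hm : 0 < m) : 0 < qInt q m := by
  unfold qInt
  exact Finset.sum_pos (fun i _ => pow_pos hq i) (Finset.nonempty_range_iff.mpr (by omega))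

lemma qFact_pos {q : ℝ} (hq : 0 < q) (m : ℕ) : 0 < qFact q m := by
  unfold qFact
  exact Finset.prod_pos fun i _ => qInt_pos hq (Nat.succ_pos i)

lemma qFact_zero (q : ℝ) : qFact q 0 = 1 := by simp [qFact]

lemma qFact_succ (q : ℝ) (m : ℕ) : qFact q (m + 1) = qFact q m * qInt q (m + 1) := by
  unfold qFact; rw [Finset.prod_range_succ]

lemma qInt_add (q : ℝ) (a b : ℕ) : qInt q (a + b) = qInt q a + q ^ a * qInt q b := by
  unfold qInt
  rw [Finset.sum_range_add, Finset.mul_sum]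
  simp [pow_add]

lemma qBinom_zero {q : ℝ} (hq : 0 < q) (m : ℕ) : qBinom q m 0 = 1 := by
  unfold qBinom
  rw [if_pos (Nat.zero_le m)]
  simp only [Nat.sub_zero, qFact_zero, one_mul]
  exact div_self (qFact_pos hq m).ne'

lemma qPascal {q : ℝ} (hq : 0 < q) {r j : ℕ} (hj : j ≤ r) :
    qBinom q (r + 1) (j + 1) = qBinom q r (j + 1) + q ^ (r - j) * qBinom q r j := by
  rcases eq_or_lt_of_le hj with rfl | hlt
  · unfold qBinom
    rw [if_pos le_rfl, if_neg (by omega), if_pos le_rfl]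
    rw [Nat.sub_self, Nat.sub_self, qFact_zero, mul_one, mul_one,
      div_self (qFact_pos hq (j+1)).ne', div_self (qFact_pos hq j).ne']
    norm_num
  · have h1 : j + 1 ≤ r := hlt
    have e1 : r + 1 - (j + 1) = r - j := by omega
    have e2 : r - j = (r - (j+1)) + 1 := by omega
    unfold qBinom
    rw [if_pos (by omega), if_pos h1, if_pos hj, e1]
    have hq1 : qInt q (r + 1) = qInt q (r - j) + q ^ (r - j) * qInt q (j + 1) := by
      have h : r + 1 = (r - j) + (j + 1) := by omega
      rw [h, qInt_add]
    rw [qFact_succ q r, e2, qFact_succ q (r - (j+1)), ← e2]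
    have h2 : qFact q j ≠ 0 := (qFact_pos hq j).ne'
    have h3 : qFact q (j+1) ≠ 0 := (qFact_pos hq (j+1)).ne'
    have h4 : qFact q (r - (j+1)) ≠ 0 := (qFact_pos hq _).ne'
    have h5 : qInt q (r - j) ≠ 0 := (qInt_pos hq (by omega)).ne'
    have h6 : qInt q (j + 1) ≠ 0 := (qInt_pos hq (by omega)).ne'
    have h7 : qFact q (j+1) = qFact q j * qInt q (j+1) := qFact_succ q j
    field_simp
    rw [hq1, h7]
    ring

lemma qDiff_expand {q : ℝ} (hq : 0 < q) (r : ℕ) (f : ℕ → ℝ) (i : ℕ) :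
    qDiff q r f i = ∑ j ∈ Finset.range (r + 1),
      (-1 : ℝ) ^ j * q ^ (j * (j - 1) / 2) * qBinom q r j * f (i + r - j) := by
  induction r generalizing i with
  | zero => simp [qDiff, qBinom_zero hq]
  | succ r ih =>
    set c : ℕ → ℝ := fun j => (-1 : ℝ) ^ j * q ^ (j * (j - 1) / 2) * qBinom q r j with hc
    set d : ℕ → ℝ := fun j => (-1 : ℝ) ^ j * q ^ (j * (j - 1) / 2) * qBinom q (r+1) j with hd
    rw [show qDiff q (r+1) f i = qDiff q r f (i+1) - q ^ r * qDiff q r f i from rfl, ih, ih]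
    have h1 : ∑ j ∈ Finset.range (r + 1), c j * f (i + 1 + r - j)
        = ∑ j ∈ Finset.range (r + 2), c j * f (i + (r+1) - j) := by
      symm
      rw [Finset.sum_range_succ]
      have : c (r+1) = 0 := by
        simp only [hc]
        unfold qBinom
        rw [if_neg (by omega)]
        ring
      rw [this, zero_mul, add_zero]
      refine Finset.sum_congr rfl fun j hj => ?_
      have : i + (r + 1) - j = i + 1 + r - j := by omega
      rw [this]
    have h2 : q ^ r * ∑ j ∈ Finset.range (r + 1), c j * f (i + r - j)
        = ∑ j ∈ Finset.range (r + 2),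
            (if j = 0 then (0:ℝ) else q ^ r * c (j - 1)) * f (i + (r+1) - j) := by
      rw [Finset.sum_range_succ' (fun j =>
        (if j = 0 then (0:ℝ) else q ^ r * c (j - 1)) * f (i + (r+1) - j)) (r+1)]
      norm_num
      rw [Finset.mul_sum]
      refine Finset.sum_congr rfl fun j hj => ?_
      have : i + (r + 1) - (j + 1) = i + r - j := by omega
      rw [this]
      simp only [hc]
      ring
    rw [h1, h2, ← Finset.sum_sub_distrib]
    apply Finset.sum_congr rfl
    intro j hj
    simp only [Finset.mem_range] at hj
    rw [← sub_mul]
    congr 1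
    match j with
    | 0 => simp [hc, hd, qBinom_zero hq]
    | j + 1 =>
      have hjr : j ≤ r := by omega
      simp only [hc, hd, Nat.succ_ne_zero, if_false, Nat.add_sub_cancel]
      rw [qPascal hq hjr]
      have hexp : (j+1) * j / 2 = j * (j-1)/2 + j := by
        rcases j with _ | m
        · simp
        · obtain ⟨t, ht⟩ := Nat.even_mul_succ_self m
          have ha : (m + 1 + 1) * (m + 1) = m*(m+1) + 2*(m+1) := by ring
          have hb : (m+1)*(m+1-1) = m*(m+1) := by simp [Nat.add_sub_cancel]; ring
          omega
      have hre : q ^ r = q ^ (r - j) * q ^ j := by rw [← pow_add]; congr 1; omega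
      rw [hexp, pow_add, hre, pow_succ]
      ring

lemma qBinom_mul {q : ℝ} (hq : 0 < q) {r j : ℕ} (hj : j ≤ r) :
    qBinom q (r + 1) j * qInt q (r + 1 - j) = qInt q (r + 1) * qBinom q r j := by
  unfold qBinom
  rw [if_pos (by omega : j ≤ r + 1), if_pos hj]
  have e : r + 1 - j = (r - j) + 1 := by omega
  rw [e, qFact_succ q r, qFact_succ q (r - j)]
  have h1 : qFact q j ≠ 0 := (qFact_pos hq j).ne'
  have h2 : qFact q (r - j) ≠ 0 := (qFact_pos hq _).ne'
  have h3 : qInt q (r - j + 1) ≠ 0 := (qInt_pos hq (by omega)).ne'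
  field_simp

theorem qDiff_pow_one (q : ℝ) (hq : 0 < q) (n k r : ℕ) (hn : 1 ≤ n) (hr : r ≤ k) :
    qDiff q r (fun m => (qInt q m / qInt q n) ^ k) 1 =
      qFact q r * q ^ (r * (r + 1) / 2) / (qInt q n) ^ k * qStirling q (k + 1) (r + 1) := by
  have hn0 : qInt q n ≠ 0 := (qInt_pos hq (by omega)).ne'
  rw [qDiff_expand hq]
  unfold qStirling
  rw [Finset.sum_range_succ (fun i => (-1 : ℝ) ^ i * q ^ (i * (i - 1) / 2) *
    qBinom q (r + 1) i * qInt q (r + 1 - i) ^ (k + 1)) (r + 1)]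
  have h0 : qInt q (r + 1 - (r + 1)) ^ (k + 1) = 0 := by
    rw [Nat.sub_self]
    simp [qInt]
  rw [h0, mul_zero, add_zero, Finset.mul_sum, Finset.mul_sum]
  refine Finset.sum_congr rfl fun j hj => ?_
  simp only [Finset.mem_range] at hj
  have hjr : j ≤ r := by omega
  have e1 : 1 + r - j = r + 1 - j := by omega
  have e2 : (r + 1) * ((r + 1) - 1) / 2 = r * (r + 1) / 2 := by
    rw [Nat.add_sub_cancel, Nat.mul_comm]
  have hfact : qFact q (r + 1) = qFact q r * qInt q (r + 1) := qFact_succ q r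
  rw [e1, e2, hfact, pow_succ (qInt q (r + 1 - j)) k, div_pow,
    show (-1 : ℝ) ^ j * q ^ (j * (j - 1) / 2) * qBinom q (r + 1) j *
        (qInt q (r + 1 - j) ^ k * qInt q (r + 1 - j)) =
      (-1 : ℝ) ^ j * q ^ (j * (j - 1) / 2) *
        (qBinom q (r + 1) j * qInt q (r + 1 - j)) * qInt q (r + 1 - j) ^ k by ring,
    qBinom_mul hq hjr]
  have h1 : qFact q r ≠ 0 := (qFact_pos hq r).ne'
  have h2 : qInt q (r + 1) ≠ 0 := (qInt_pos hq (by omega)).ne'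
  have h3 : (q : ℝ) ^ (r * (r + 1) / 2) ≠ 0 := pow_ne_zero _ hq.ne'
  field_simp
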